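/- Let s ∈ (0, 1), 𝒦 ∈ (0, 1], and let b : [−1, 1] → [0, ∞) be measurable with 𝒦 θ^{−1−2s} ≤ sin θ · b(cos θ) ≤ 𝒦^{−1} θ^{−1−2s} for all θ ∈ (0, π/2]. Fix a unit vector u ∈ ℝ³ and for σ on the unit sphere S² let θ(σ) := arccos(u·σ). Then there exists a constant C(𝒦, s) > 0 such that for all real numbers a > 0 and r > 0: ∫_{S²} b(cos θ(σ)) 1_{θ(σ) ≤ π/2} 1_{sin(θ(σ)/2) > a/r} dσ ≤ C(𝒦, s) a^{−2s} r^{2s}. -/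

import Mathlib

open MeasureTheory Real RealInnerProductSpace
open scoped ENNReal Pointwise

/-- The surface measure on the unit sphere `S² ⊂ ℝ³`. -/
noncomputable def sphereMeasure :
    Measure (Metric.sphere (0 : EuclideanSpace ℝ (Fin 3)) 1) :=
  (volume : Measure (EuclideanSpace ℝ (Fin 3))).toSphere

lemma cap_bound (u : EuclideanSpace ℝ (Fin 3)) (hu : ‖u‖ = 1) (t : ℝ) (ht : 0 ≤ t) :
    sphereMeasure {σ : Metric.sphere (0 : EuclideanSpace ℝ (Fin 3)) 1 |
      Real.arccos ⟪u, (σ : EuclideanSpace ℝ (Fin 3))⟫ ≤ t} ≤ ENNReal.ofReal (24 * t ^ 2) := by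
  let E := EuclideanSpace ℝ (Fin 3)
  have hmeas : Measurable fun σ : Metric.sphere (0 : E) 1 =>
      Real.arccos ⟪u, (σ : E)⟫ :=
    (Real.continuous_arccos.comp ((continuous_const.inner continuous_subtype_val))).measurable
  have hs : MeasurableSet {σ : Metric.sphere (0 : E) 1 |
      Real.arccos ⟪u, (σ : E)⟫ ≤ t} := hmeas measurableSet_Iic
  rw [sphereMeasure, Measure.toSphere_apply' _ hs]
  set v : E := EuclideanSpace.single (0 : Fin 3) (1 : ℝ) with hv_def
  have hv : ‖v‖ = 1 := by rw [hv_def, EuclideanSpace.norm_single, norm_one]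
  set f : E ≃ₗᵢ[ℝ] E := Submodule.reflection (ℝ ∙ (u - v))ᗮ with hf_def
  have hfu : f u = v := Submodule.reflection_sub (by rw [hu, hv])
  set M : Fin 3 → ℝ := ![1, t, t] with hM_def
  set box : Set E := (MeasurableEquiv.toLp 2 (Fin 3 → ℝ)).symm ⁻¹'
      (Set.univ.pi fun i => Set.Icc (-(M i)) (M i)) with hbox_def
  have hbox_meas : MeasurableSet box :=
    (MeasurableEquiv.toLp 2 (Fin 3 → ℝ)).symm.measurable
      (MeasurableSet.univ_pi fun i => measurableSet_Icc)
  have hsubset : (Set.Ioo (0:ℝ) 1 •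
      ((↑) '' {σ : Metric.sphere (0 : E) 1 | Real.arccos ⟪u, (σ : E)⟫ ≤ t})) ⊆ f ⁻¹' box := by
    rintro x hx
    rw [Set.mem_smul] at hx
    obtain ⟨c, hc, y, hy, rfl⟩ := hx
    obtain ⟨σ, hσ, rfl⟩ := hy
    have hσn : ‖(σ : E)‖ = 1 := by
      have := σ.2
      rwa [mem_sphere_zero_iff_norm] at this
    set q : ℝ := ⟪u, (σ : E)⟫ with hq_def
    have hq : |q| ≤ 1 := by
      calc |q| ≤ ‖u‖ * ‖(σ : E)‖ := abs_real_inner_le_norm u _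
      _ = 1 := by rw [hu, hσn]; ring
    set w : E := f (σ : E) with hw_def
    have hw0 : w 0 = q := by
      have : ⟪v, w⟫ = q := by
        rw [← hfu, hw_def, f.inner_map_map]
      rw [← this, hv_def, EuclideanSpace.inner_single_left]
      simp
    have hwn : ‖w‖ = 1 := by rw [hw_def, f.norm_map, hσn]
    have hwsum : w 0 ^ 2 + w 1 ^ 2 + w 2 ^ 2 = 1 := by
      have h := EuclideanSpace.norm_eq w
      rw [hwn] at h
      have h2 : Real.sqrt (∑ i, ‖w i‖ ^ 2) = 1 := h.symm
      have h3 : (∑ i, ‖w i‖ ^ 2) = 1 := by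
        have := Real.sqrt_eq_one.mp h2
        exact this
      rw [Fin.sum_univ_three] at h3
      simpa [sq_abs] using h3
    -- bound on coordinates 1, 2
    have hcos : Real.cos (Real.arccos q) = q :=
      Real.cos_arccos (neg_le_of_abs_le hq) (le_of_abs_le hq)
    have hsint : Real.sin (Real.arccos q) ≤ t := by
      calc Real.sin (Real.arccos q) ≤ Real.arccos q :=
            Real.sin_le (Real.arccos_nonneg q)
        _ ≤ t := hσ
    have hsin_nonneg : 0 ≤ Real.sin (Real.arccos q) :=
      Real.sin_nonneg_of_nonneg_of_le_pi (Real.arccos_nonneg q) (Real.arccos_le_pi q)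
    have hsq : 1 - q ^ 2 ≤ t ^ 2 := by
      have : Real.sin (Real.arccos q) ^ 2 = 1 - q ^ 2 := by
        rw [Real.sin_sq, hcos]
      rw [← this]
      exact pow_le_pow_left₀ hsin_nonneg hsint 2
    have hq2 : w 0 ^ 2 = q ^ 2 := by rw [hw0]
    have hw1 : w 1 ^ 2 ≤ t ^ 2 := by nlinarith [sq_nonneg (w 2)]
    have hw2 : w 2 ^ 2 ≤ t ^ 2 := by nlinarith [sq_nonneg (w 1)]
    -- now membership
    have hcw : f (c • (σ : E)) = c • w := by rw [hw_def, f.map_smul]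
    rw [Set.mem_preimage, hcw, hbox_def, Set.mem_preimage, Set.mem_pi]
    intro i _
    have happ : (MeasurableEquiv.toLp 2 (Fin 3 → ℝ)).symm (c • w) i = c * w i := rfl
    rw [happ, Set.mem_Icc, ← abs_le]
    have hcabs : |c| ≤ 1 := by
      rw [abs_of_pos hc.1]; exact hc.2.le
    have habs1 : |w 1| ≤ t := abs_le.mpr (abs_le_of_sq_le_sq' hw1 ht)
    have habs2 : |w 2| ≤ t := abs_le.mpr (abs_le_of_sq_le_sq' hw2 ht)
    have habs0 : |w 0| ≤ 1 := by rw [hw0]; exact hq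
    fin_cases i <;>
      simp only [hM_def, Matrix.cons_val_zero, Matrix.cons_val_one, Matrix.head_cons,
        Matrix.cons_val_two, Matrix.tail_cons] <;>
      [skip; skip; skip] <;>
      calc |c * w _| = |c| * |w _| := abs_mul c _
        _ ≤ 1 * _ := mul_le_mul hcabs (by first | exact habs0 | exact habs1 | exact habs2)
              (abs_nonneg _) zero_le_one
        _ = _ := one_mul _
  have hvolbox : volume box = ENNReal.ofReal (8 * t ^ 2) := by
    rw [hbox_def,
      (EuclideanSpace.volume_preserving_symm_measurableEquiv_toLp (Fin 3)).measure_preimage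
        ((MeasurableSet.univ_pi fun i => measurableSet_Icc).nullMeasurableSet),
      volume_pi_pi, Fin.prod_univ_three]
    simp only [hM_def, Real.volume_Icc, Matrix.cons_val_zero, Matrix.cons_val_one,
      Matrix.head_cons, Matrix.cons_val_two, Matrix.tail_cons]
    rw [← ENNReal.ofReal_mul (by norm_num), ← ENNReal.ofReal_mul (by linarith)]
    congr 1
    ring
  calc (Module.finrank ℝ (EuclideanSpace ℝ (Fin 3)) : ℝ≥0∞) * volume (Set.Ioo (0:ℝ) 1 •
        (Subtype.val '' {σ : Metric.sphere (0 : E) 1 | Real.arccos ⟪u, (σ : E)⟫ ≤ t}))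
      ≤ 3 * volume (f ⁻¹' box) := by
        rw [finrank_euclideanSpace_fin]
        exact mul_le_mul_right (measure_mono hsubset) 3
    _ = 3 * ENNReal.ofReal (8 * t ^ 2) := by
        rw [f.measurePreserving.measure_preimage hbox_meas.nullMeasurableSet, hvolbox]
    _ = ENNReal.ofReal (24 * t ^ 2) := by
        rw [← ENNReal.ofReal_ofNat 3, ← ENNReal.ofReal_mul (by norm_num)]
        congr 1
        ring

/-- For a non-cutoff angular kernel `b` with
`𝒦 θ^{−1−2s} ≤ sin θ · b(cos θ) ≤ 𝒦⁻¹ θ^{−1−2s}` on `(0, π/2]`, `s ∈ (0,1)`,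
there is `C(𝒦, s) > 0` such that for all `a, r > 0`:
`∫_{S²} b(cos θ(σ)) 1_{θ(σ) ≤ π/2} 1_{sin(θ(σ)/2) > a/r} dσ ≤ C(𝒦, s) a^{−2s} r^{2s}`,
where `θ(σ) = arccos(u·σ)`. -/
theorem angular_integral_large_dev (s 𝒦 : ℝ) (hs : 0 < s) (hs1 : s < 1)
    (hK : 0 < 𝒦) (hK1 : 𝒦 ≤ 1) (b : ℝ → ℝ) (hb_meas : Measurable b)
    (hb_nonneg : ∀ x, 0 ≤ b x)
    (hb : ∀ θ : ℝ, 0 < θ → θ ≤ π / 2 →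
      𝒦 * θ ^ (-1 - 2 * s) ≤ Real.sin θ * b (Real.cos θ) ∧
      Real.sin θ * b (Real.cos θ) ≤ 𝒦⁻¹ * θ ^ (-1 - 2 * s))
    (u : EuclideanSpace ℝ (Fin 3)) (hu : ‖u‖ = 1) :
    ∃ C : ℝ, 0 < C ∧ ∀ a r : ℝ, 0 < a → 0 < r →
      (∫⁻ σ : Metric.sphere (0 : EuclideanSpace ℝ (Fin 3)) 1,
          ENNReal.ofReal
            (if Real.arccos ⟪u, (σ : EuclideanSpace ℝ (Fin 3))⟫ ≤ π / 2 ∧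
                a / r < Real.sin (Real.arccos ⟪u, (σ : EuclideanSpace ℝ (Fin 3))⟫ / 2)
              then
              b (Real.cos (Real.arccos ⟪u, (σ : EuclideanSpace ℝ (Fin 3))⟫))
            else 0) ∂sphereMeasure)
        ≤ ENNReal.ofReal (C * a ^ (-(2 * s)) * r ^ (2 * s)) := by
  have hπ : (0:ℝ) < π := Real.pi_pos
  set ρ : ℝ := (2:ℝ) ^ (-(2*s)) with hρ_def
  have hρ0 : 0 < ρ := Real.rpow_pos_of_pos two_pos _
  have hρ1 : ρ < 1 :=
    Real.rpow_lt_one_of_one_lt_of_neg one_lt_two (by linarith)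
  have h1ρ : 0 < 1 - ρ := by linarith
  refine ⟨96 * 𝒦⁻¹ * (π/2) * ρ * (1 - ρ)⁻¹, by positivity, ?_⟩
  intro a r ha hr
  set q : ℝ := a / r with hq_def
  have hq0 : 0 < q := div_pos ha hr
  set t₀ : ℝ := 2 * q with ht₀_def
  have ht₀0 : 0 < t₀ := by positivity
  set A : ℕ → Set (Metric.sphere (0 : EuclideanSpace ℝ (Fin 3)) 1) :=
    fun k => {σ | Real.arccos ⟪u, (σ : EuclideanSpace ℝ (Fin 3))⟫ ≤ 2^(k+1) * t₀} with hA_def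
  have hA_meas : ∀ k, MeasurableSet (A k) := fun k =>
    ((Real.continuous_arccos.comp
      (continuous_const.inner continuous_subtype_val)).measurable) measurableSet_Iic
  set c : ℕ → ℝ := fun k => 𝒦⁻¹ * (π/2) * ((2:ℝ)^k * t₀) ^ (-2 - 2*s) with hc_def
  have hc_nonneg : ∀ k, 0 ≤ c k := by
    intro k
    have : (0:ℝ) < (2:ℝ)^k * t₀ := by positivity
    positivity
  set D : ℝ := 96 * 𝒦⁻¹ * (π/2) * ρ * (a ^ (-(2*s)) * r ^ (2*s)) with hD_def
  have hD0 : 0 ≤ D := by positivity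
  -- pointwise bound
  have hpt : ∀ σ : Metric.sphere (0 : EuclideanSpace ℝ (Fin 3)) 1,
      ENNReal.ofReal
        (if Real.arccos ⟪u, (σ : EuclideanSpace ℝ (Fin 3))⟫ ≤ π / 2 ∧
            a / r < Real.sin (Real.arccos ⟪u, (σ : EuclideanSpace ℝ (Fin 3))⟫ / 2)
          then b (Real.cos (Real.arccos ⟪u, (σ : EuclideanSpace ℝ (Fin 3))⟫)) else 0)
      ≤ ∑' k, (A k).indicator (fun _ => ENNReal.ofReal (c k)) σ := by
    intro σ
    by_cases hcond : Real.arccos ⟪u, (σ : EuclideanSpace ℝ (Fin 3))⟫ ≤ π / 2 ∧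
        a / r < Real.sin (Real.arccos ⟪u, (σ : EuclideanSpace ℝ (Fin 3))⟫ / 2)
    swap
    · rw [if_neg hcond]; simp
    rw [if_pos hcond]
    set θ : ℝ := Real.arccos ⟪u, (σ : EuclideanSpace ℝ (Fin 3))⟫ with hθ_def
    obtain ⟨hθπ, hsin⟩ := hcond
    have hθ_nonneg : 0 ≤ θ := Real.arccos_nonneg _
    have hθt₀ : t₀ < θ := by
      have h1 : Real.sin (θ/2) ≤ θ/2 := Real.sin_le (by linarith)
      have : q < θ/2 := lt_of_lt_of_le hsin h1
      rw [ht₀_def]; linarith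
    have hθ0 : 0 < θ := lt_trans ht₀0 hθt₀
    -- bound on b (cos θ)
    have hbb : b (Real.cos θ) ≤ 𝒦⁻¹ * (π/2) * θ ^ (-2 - 2*s) := by
      have hjordan : 2/π * θ ≤ Real.sin θ := Real.mul_le_sin hθ_nonneg hθπ
      have h1 : 2/π * θ * b (Real.cos θ) ≤ 𝒦⁻¹ * θ ^ (-1 - 2*s) :=
        le_trans (mul_le_mul_of_nonneg_right hjordan (hb_nonneg _)) (hb θ hθ0 hθπ).2
      have h2 : θ ^ (-2 - 2*s) * θ = θ ^ (-1 - 2*s) := by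
        rw [← Real.rpow_add_one hθ0.ne' (-2 - 2*s)]
        ring_nf
      rw [← h2] at h1
      calc b (Real.cos θ) = (2/π * θ * b (Real.cos θ)) * (π/(2*θ)) := by
            field_simp
        _ ≤ (𝒦⁻¹ * (θ ^ (-2 - 2*s) * θ)) * (π/(2*θ)) :=
            mul_le_mul_of_nonneg_right h1 (by positivity)
        _ = 𝒦⁻¹ * (π/2) * θ ^ (-2 - 2*s) := by
            field_simp
    -- find the dyadic index
    obtain ⟨k, hk1, hk2⟩ := exists_nat_pow_near
      ((one_le_div ht₀0).mpr hθt₀.le) (one_lt_two (α := ℝ))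
    have hk1' : (2:ℝ)^k * t₀ ≤ θ := (le_div_iff₀ ht₀0).mp hk1
    have hk2' : θ ≤ (2:ℝ)^(k+1) * t₀ := by
      rw [div_lt_iff₀ ht₀0] at hk2
      linarith
    have hmem : σ ∈ A k := hk2'
    have hck : b (Real.cos θ) ≤ c k := by
      refine le_trans hbb ?_
      rw [hc_def]
      have h3 : θ ^ (-2 - 2*s) ≤ ((2:ℝ)^k * t₀) ^ (-2 - 2*s) :=
        Real.rpow_le_rpow_of_nonpos (by positivity) hk1' (by linarith)
      have h4 : (0:ℝ) < 𝒦⁻¹ * (π/2) := by positivity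
      exact mul_le_mul_of_nonneg_left h3 h4.le
    calc ENNReal.ofReal (b (Real.cos θ)) ≤ (A k).indicator
          (fun _ => ENNReal.ofReal (c k)) σ := by
          rw [Set.indicator_of_mem hmem]
          exact ENNReal.ofReal_le_ofReal hck
      _ ≤ ∑' k, (A k).indicator (fun _ => ENNReal.ofReal (c k)) σ := ENNReal.le_tsum k
  -- the per-term value
  have hterm : ∀ k : ℕ, c k * (24 * ((2:ℝ)^(k+1) * t₀) ^ 2) = D * ρ ^ k := by
    intro k
    set x : ℝ := (2:ℝ)^k * t₀ with hx_def
    have hx0 : (0:ℝ) < x := by positivity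
    have e1 : (2:ℝ)^(k+1) * t₀ = 2 * x := by rw [hx_def]; ring
    have e2 : x ^ (-2 - 2*s) * x ^ (2:ℕ) = x ^ (-(2*s)) := by
      rw [← Real.rpow_natCast x 2, ← Real.rpow_add hx0]
      congr 1
      ring
    have e3 : x ^ (-(2*s)) = ρ ^ k * (t₀ ^ (-(2*s))) := by
      rw [hx_def, Real.mul_rpow (by positivity) ht₀0.le]
      congr 1
      rw [← Real.rpow_natCast (2:ℝ) k, ← Real.rpow_mul (by norm_num),
        mul_comm ((k:ℝ)) (-(2*s)), Real.rpow_mul (by norm_num), Real.rpow_natCast]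
    have e4 : t₀ ^ (-(2*s)) = ρ * (a ^ (-(2*s)) * r ^ (2*s)) := by
      rw [ht₀_def, Real.mul_rpow (by norm_num) hq0.le]
      congr 1
      rw [hq_def, Real.div_rpow ha.le hr.le, Real.rpow_neg hr.le, div_inv_eq_mul]
    calc c k * (24 * ((2:ℝ)^(k+1) * t₀) ^ 2)
        = 96 * (𝒦⁻¹ * (π/2)) * (x ^ (-2 - 2*s) * x ^ (2:ℕ)) := by
          rw [hc_def, e1]; ring
      _ = 96 * (𝒦⁻¹ * (π/2)) * (ρ ^ k * (ρ * (a ^ (-(2*s)) * r ^ (2*s)))) := by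
          rw [e2, e3, e4]
      _ = D * ρ ^ k := by rw [hD_def]; ring
  -- put it together
  calc (∫⁻ σ : Metric.sphere (0 : EuclideanSpace ℝ (Fin 3)) 1,
        ENNReal.ofReal
          (if Real.arccos ⟪u, (σ : EuclideanSpace ℝ (Fin 3))⟫ ≤ π / 2 ∧
              a / r < Real.sin (Real.arccos ⟪u, (σ : EuclideanSpace ℝ (Fin 3))⟫ / 2)
            then b (Real.cos (Real.arccos ⟪u, (σ : EuclideanSpace ℝ (Fin 3))⟫)) else 0)
          ∂sphereMeasure)
      ≤ ∫⁻ σ, ∑' k, (A k).indicator (fun _ => ENNReal.ofReal (c k)) σ ∂sphereMeasure :=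
        lintegral_mono hpt
    _ = ∑' k, ∫⁻ σ, (A k).indicator (fun _ => ENNReal.ofReal (c k)) σ ∂sphereMeasure :=
        lintegral_tsum fun k => (measurable_const.indicator (hA_meas k)).aemeasurable
    _ = ∑' k, ENNReal.ofReal (c k) * sphereMeasure (A k) := by
        refine tsum_congr fun k => ?_
        rw [lintegral_indicator_const (hA_meas k)]
    _ ≤ ∑' k, ENNReal.ofReal (c k) * ENNReal.ofReal (24 * ((2:ℝ)^(k+1) * t₀) ^ 2) := by
        refine ENNReal.tsum_le_tsum fun k => ?_
        exact mul_le_mul_right (cap_bound u hu _ (by positivity)) _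
    _ = ∑' k, ENNReal.ofReal D * (ENNReal.ofReal ρ) ^ k := by
        refine tsum_congr fun k => ?_
        rw [← ENNReal.ofReal_mul (hc_nonneg k), hterm k, ENNReal.ofReal_mul hD0,
          ENNReal.ofReal_pow hρ0.le]
    _ = ENNReal.ofReal D * (1 - ENNReal.ofReal ρ)⁻¹ := by
        rw [ENNReal.tsum_mul_left, ENNReal.tsum_geometric]
    _ = ENNReal.ofReal (96 * 𝒦⁻¹ * (π/2) * ρ * (1 - ρ)⁻¹ * a ^ (-(2 * s)) * r ^ (2 * s)) := by
        rw [← ENNReal.ofReal_one, ← ENNReal.ofReal_sub _ hρ0.le,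
          ← ENNReal.ofReal_inv_of_pos h1ρ, ← ENNReal.ofReal_mul hD0]
        congr 1
        rw [hD_def]
        ring
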